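/- Let n, p ∈ ℕ, x₁,…,xₙ ∈ ℝᵖ, s₁,…,sₙ ≥ 0, m₁,…,mₙ ≥ 0, y₁,…,yₙ ∈ ℝ, and u_i = y_i − m_i/2. Then for all β, βₜ ∈ ℝᵖ, ℓ(β) − ℓ(βₜ) ≥ Σᵢ sᵢ uᵢ xᵢᵀ(β − βₜ) − (1/2) Σᵢ sᵢ ω(xᵢᵀβₜ, mᵢ)·((xᵢᵀβ)² − (xᵢᵀβₜ)²), where ℓ(β) = Σᵢ sᵢ[yᵢ xᵢᵀβ − mᵢ log(1 + exp(xᵢᵀβ))]. That is, the increase in the weighted observed log-likelihood is at least the increase in the Pólya-Gamma Q-function. -/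

import Mathlib

open Matrix


lemma hasDerivAt_tanh (x : ℝ) : HasDerivAt Real.tanh (1 / (Real.cosh x)^2) x := by
  have h : HasDerivAt (fun x => Real.sinh x / Real.cosh x)
      ((Real.cosh x * Real.cosh x - Real.sinh x * Real.sinh x) / (Real.cosh x)^2) x :=
    (Real.hasDerivAt_sinh x).div (Real.hasDerivAt_cosh x) (ne_of_gt (Real.cosh_pos x))
  have e : (fun x => Real.sinh x / Real.cosh x) = Real.tanh :=
    funext fun x => (Real.tanh_eq_sinh_div_cosh x).symm
  rw [e] at h
  convert h using 2
  have := Real.cosh_sq_sub_sinh_sq x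
  nlinarith

/-- `a * tanh b ≤ b * tanh a` for `0 ≤ a ≤ b` (i.e. `tanh x / x` is antitone on `[0,∞)`). -/
lemma mul_tanh_le (a b : ℝ) (ha : 0 ≤ a) (hab : a ≤ b) :
    a * Real.tanh b ≤ b * Real.tanh a := by
  have key : MonotoneOn (fun x => x * Real.tanh a - a * Real.tanh x) (Set.Icc a b) := by
    apply monotoneOn_of_deriv_nonneg (convex_Icc a b)
    · have hcont : Continuous Real.tanh := continuous_iff_continuousAt.mpr
        fun x => (hasDerivAt_tanh x).differentiableAt.continuousAt
      exact ((continuous_id.mul continuous_const).sub (continuous_const.mul hcont)).continuousOn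
    · intro x hx
      exact ((hasDerivAt_id x).mul_const _ |>.sub
        ((hasDerivAt_tanh x).const_mul a)).differentiableAt.differentiableWithinAt
    · intro x hx
      rw [interior_Icc] at hx
      have hd : HasDerivAt (fun x => x * Real.tanh a - a * Real.tanh x)
          (1 * Real.tanh a - a * (1 / (Real.cosh x)^2)) x :=
        ((hasDerivAt_id x).mul_const _).sub ((hasDerivAt_tanh x).const_mul a)
      rw [hd.deriv]
      have hca : (1:ℝ) ≤ Real.cosh a := Real.one_le_cosh a
      have hcax : Real.cosh a ≤ Real.cosh x := by
        rw [Real.cosh_le_cosh]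
        rw [abs_of_nonneg ha, abs_of_nonneg (le_of_lt (lt_of_le_of_lt ha hx.1))]
        exact le_of_lt hx.1
      have hsa : a ≤ Real.sinh a := Real.self_le_sinh_iff.mpr ha
      have hsanon : 0 ≤ Real.sinh a := Real.sinh_nonneg_iff.mpr ha
      -- tanh a = sinh a / cosh a ; need a / cosh x ^ 2 ≤ tanh a
      rw [Real.tanh_eq_sinh_div_cosh]
      rw [sub_nonneg, one_mul]
      have hcx : (0:ℝ) < Real.cosh x := Real.cosh_pos x
      have hcapos : (0:ℝ) < Real.cosh a := Real.cosh_pos a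
      rw [mul_one_div, div_le_div_iff₀ (by positivity) hcapos]
      have hcx1 : (1:ℝ) ≤ Real.cosh x := Real.one_le_cosh x
      nlinarith [mul_le_mul_of_nonneg_right hsa hcapos.le,
        mul_le_mul_of_nonneg_left hcax hsanon,
        mul_nonneg hsanon (mul_nonneg hcx.le (sub_nonneg.mpr hcx1))]
  have h := key (Set.left_mem_Icc.mpr hab) (Set.right_mem_Icc.mpr hab) hab
  simp only at h
  linarith

lemma tanh_le_self {v : ℝ} (hv : 0 ≤ v) : Real.tanh v ≤ v := by
  -- sinh v ≤ v * cosh v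
  have key : MonotoneOn (fun x => x * Real.cosh x - Real.sinh x) (Set.Icc 0 v) := by
    apply monotoneOn_of_deriv_nonneg (convex_Icc 0 v)
    · exact ((continuous_id.mul Real.continuous_cosh).sub Real.continuous_sinh).continuousOn
    · intro x _
      exact (((hasDerivAt_id x).mul (Real.hasDerivAt_cosh x)).sub
        (Real.hasDerivAt_sinh x)).differentiableAt.differentiableWithinAt
    · intro x hx
      rw [interior_Icc] at hx
      have hd : HasDerivAt (fun x => x * Real.cosh x - Real.sinh x)
          (1 * Real.cosh x + x * Real.sinh x - Real.cosh x) x :=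
        ((hasDerivAt_id x).mul (Real.hasDerivAt_cosh x)).sub (Real.hasDerivAt_sinh x)
      rw [hd.deriv]
      have : 0 ≤ Real.sinh x := Real.sinh_nonneg_iff.mpr hx.1.le
      nlinarith [hx.1]
  by_cases hv0 : v = 0
  · simp [hv0, Real.tanh_zero]
  have hvpos : 0 < v := lt_of_le_of_ne hv (Ne.symm hv0)
  have h := key (Set.left_mem_Icc.mpr hv) (Set.right_mem_Icc.mpr hv) hv
  simp only [Real.cosh_zero, Real.sinh_zero, mul_one, zero_mul] at h
  rw [Real.tanh_eq_sinh_div_cosh, div_le_iff₀ (Real.cosh_pos v)]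
  linarith

/-- `log (cosh u) ≤ u^2/2` for all `u`. -/
lemma log_cosh_le_sq (u : ℝ) : Real.log (Real.cosh u) ≤ u^2 / 2 := by
  wlog hu : 0 ≤ u with H
  · have := H (-u) (by linarith)
    simpa [Real.cosh_neg] using this
  have key : MonotoneOn (fun v => v^2/2 - Real.log (Real.cosh v)) (Set.Icc 0 u) := by
    apply monotoneOn_of_deriv_nonneg (convex_Icc 0 u)
    · apply ContinuousOn.sub (by fun_prop)
      exact (Real.continuous_cosh.continuousOn.log fun x _ => (Real.cosh_pos x).ne')
    · intro x _
      have hd : HasDerivAt (fun v => v^2/2 - Real.log (Real.cosh v))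
          (x - Real.tanh x) x := by
        have h1 : HasDerivAt (fun v : ℝ => v^2/2) x x := by
          simpa using ((hasDerivAt_pow 2 x).div_const 2)
        have h2 : HasDerivAt (fun v => Real.log (Real.cosh v)) (Real.tanh x) x := by
          have := (Real.hasDerivAt_cosh x).log (Real.cosh_pos x).ne'
          simpa [Real.tanh_eq_sinh_div_cosh] using this
        exact h1.sub h2
      exact hd.differentiableAt.differentiableWithinAt
    · intro x hx
      rw [interior_Icc] at hx
      have hd : HasDerivAt (fun v => v^2/2 - Real.log (Real.cosh v))
          (x - Real.tanh x) x := by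
        have h1 : HasDerivAt (fun v : ℝ => v^2/2) x x := by
          simpa using ((hasDerivAt_pow 2 x).div_const 2)
        have h2 : HasDerivAt (fun v => Real.log (Real.cosh v)) (Real.tanh x) x := by
          have := (Real.hasDerivAt_cosh x).log (Real.cosh_pos x).ne'
          simpa [Real.tanh_eq_sinh_div_cosh] using this
        exact h1.sub h2
      rw [hd.deriv, sub_nonneg]
      exact tanh_le_self hx.1.le
  have h := key (Set.left_mem_Icc.mpr hu) (Set.right_mem_Icc.mpr hu) hu
  simp only [Real.cosh_zero, Real.log_one] at h
  norm_num at h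
  linarith

/-- Jaakkola–Jordan bound in log-cosh form, for positive anchor. -/
lemma log_cosh_bound (u u₀ : ℝ) (hu₀ : 0 < u₀) (hu : 0 ≤ u) :
    Real.log (Real.cosh u) ≤ Real.log (Real.cosh u₀)
      + Real.tanh u₀ / (2*u₀) * (u^2 - u₀^2) := by
  set c : ℝ := Real.tanh u₀ / (2*u₀) with hc
  have hG : ∀ v : ℝ, HasDerivAt (fun v => c * v^2 - Real.log (Real.cosh v))
      (c * (2*v) - Real.tanh v) v := by
    intro v
    have h1 : HasDerivAt (fun v : ℝ => c * v^2) (c * (2*v)) v := by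
      have := (hasDerivAt_pow 2 v).const_mul c
      simpa [mul_comm] using this
    have h2 : HasDerivAt (fun v => Real.log (Real.cosh v)) (Real.tanh v) v := by
      have := (Real.hasDerivAt_cosh v).log (Real.cosh_pos v).ne'
      simpa [Real.tanh_eq_sinh_div_cosh] using this
    exact h1.sub h2
  have hGcont : Continuous (fun v => c * v^2 - Real.log (Real.cosh v)) :=
    continuous_iff_continuousAt.mpr fun v => (hG v).differentiableAt.continuousAt
  have key : c * u₀^2 - Real.log (Real.cosh u₀) ≤ c * u^2 - Real.log (Real.cosh u) := by
    rcases le_total u₀ u with h | h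
    · have mono : MonotoneOn (fun v => c * v^2 - Real.log (Real.cosh v)) (Set.Icc u₀ u) := by
        apply monotoneOn_of_deriv_nonneg (convex_Icc u₀ u) hGcont.continuousOn
        · exact fun x _ => (hG x).differentiableAt.differentiableWithinAt
        · intro x hx
          rw [interior_Icc] at hx
          rw [(hG x).deriv, sub_nonneg]
          have := mul_tanh_le u₀ x hu₀.le hx.1.le
          rw [hc]
          rw [div_mul_eq_mul_div, le_div_iff₀ (by positivity)]
          nlinarith
      have := mono (Set.left_mem_Icc.mpr h) (Set.right_mem_Icc.mpr h) h
      simpa using this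
    · have anti : AntitoneOn (fun v => c * v^2 - Real.log (Real.cosh v)) (Set.Icc u u₀) := by
        apply antitoneOn_of_deriv_nonpos (convex_Icc u u₀) hGcont.continuousOn
        · exact fun x _ => (hG x).differentiableAt.differentiableWithinAt
        · intro x hx
          rw [interior_Icc] at hx
          rw [(hG x).deriv, sub_nonpos]
          have hx0 : 0 ≤ x := le_trans hu hx.1.le
          have := mul_tanh_le x u₀ hx0 hx.2.le
          rw [hc]
          rw [div_mul_eq_mul_div, div_le_iff₀ (by positivity)]
          nlinarith
      have := anti (Set.left_mem_Icc.mpr h) (Set.right_mem_Icc.mpr h) h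
      simpa using this
  linarith
/-- The Pólya-Gamma EM weight function: ω(t,m) = (m/(2t))·tanh(t/2) for t ≠ 0,
and ω(0,m) = m/4. -/
noncomputable def omegaPG (t m : ℝ) : ℝ :=
  if t = 0 then m / 4 else m / (2 * t) * Real.tanh (t / 2)


lemma log_one_add_exp (r : ℝ) :
    Real.log (1 + Real.exp r) = Real.log 2 + r/2 + Real.log (Real.cosh (r/2)) := by
  have e1 : Real.exp (r/2) * Real.exp (r/2) = Real.exp r := by
    rw [← Real.exp_add]; ring_nf
  have e2 : Real.exp (r/2) * Real.exp (-(r/2)) = 1 := by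
    rw [← Real.exp_add]; simp
  have h1 : 1 + Real.exp r = 2 * Real.exp (r/2) * Real.cosh (r/2) := by
    rw [Real.cosh_eq]
    linear_combination -e1 - e2
  rw [h1, Real.log_mul (by positivity) (Real.cosh_pos _).ne',
    Real.log_mul (by norm_num) (Real.exp_pos _).ne', Real.log_exp]

/-- The Jaakkola–Jordan quadratic lower bound, in upper-bound-on-log form. -/
lemma jj_bound (t t₀ : ℝ) :
    Real.log (1 + Real.exp t) ≤ Real.log (1 + Real.exp t₀) + (t - t₀)/2
      + omegaPG t₀ 1 / 2 * (t^2 - t₀^2) := by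
  rw [log_one_add_exp t, log_one_add_exp t₀]
  have habs : ∀ r : ℝ, Real.cosh (r/2) = Real.cosh (|r|/2) := by
    intro r
    rw [← Real.cosh_abs (r/2), abs_div, abs_two]
  rw [habs t, habs t₀]
  have hsq : ∀ r : ℝ, |r|^2 = r^2 := fun r => sq_abs r
  by_cases ht₀ : t₀ = 0
  · subst ht₀
    simp only [omegaPG, if_pos rfl, abs_zero]
    norm_num
    have := log_cosh_le_sq (|t|/2)
    have h2 : (|t|/2)^2 = t^2/4 := by rw [div_pow, hsq]; norm_num
    rw [h2] at this
    linarith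
  · have ht₀pos : 0 < |t₀| := abs_pos.mpr ht₀
    have hb := log_cosh_bound (|t|/2) (|t₀|/2) (by positivity) (by positivity)
    have hc : Real.tanh (|t₀|/2) / (2 * (|t₀|/2)) = Real.tanh (t₀/2) / t₀ := by
      rcases lt_or_gt_of_ne ht₀ with h | h
      · rw [abs_of_neg h]
        rw [show -t₀/2 = -(t₀/2) by ring, Real.tanh_neg]
        field_simp
      · rw [abs_of_pos h]
        field_simp
    rw [hc] at hb
    have hsqt : (|t|/2)^2 = t^2/4 := by rw [div_pow, hsq]; norm_num
    have hsqt₀ : (|t₀|/2)^2 = t₀^2/4 := by rw [div_pow, hsq]; norm_num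
    rw [hsqt, hsqt₀] at hb
    simp only [omegaPG, if_neg ht₀]
    have : 1 / (2 * t₀) * Real.tanh (t₀/2) / 2 * (t^2 - t₀^2)
        = Real.tanh (t₀/2) / t₀ * (t^2/4 - t₀^2/4) := by
      field_simp
      ring
    rw [this]
    linarith

lemma omegaPG_smul (t m : ℝ) : omegaPG t m = m * omegaPG t 1 := by
  unfold omegaPG; split_ifs <;> ring

lemma pointwise_bound (t t₀ m y : ℝ) (hm : 0 ≤ m) :
    (y - m/2)*(t - t₀) - 1/2 * omegaPG t₀ m * (t^2 - t₀^2)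
      ≤ (y*t - m*Real.log (1 + Real.exp t)) - (y*t₀ - m*Real.log (1 + Real.exp t₀)) := by
  have hm' := mul_le_mul_of_nonneg_left (jj_bound t t₀) hm
  rw [omegaPG_smul]
  nlinarith [hm']
/-- The increase in the weighted observed log-likelihood is at least the increase
in the Pólya-Gamma Q-function. -/
theorem loglik_increase_ge_Q_increase (n p : ℕ) (x : Fin n → Fin p → ℝ)
    (s m y : Fin n → ℝ) (hs : ∀ i, 0 ≤ s i) (hm : ∀ i, 0 ≤ m i)
    (β βt : Fin p → ℝ) :
    (∑ i, s i * (y i * (x i ⬝ᵥ β) - m i * Real.log (1 + Real.exp (x i ⬝ᵥ β))))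
      - (∑ i, s i * (y i * (x i ⬝ᵥ βt) - m i * Real.log (1 + Real.exp (x i ⬝ᵥ βt))))
    ≥ (∑ i, s i * (y i - m i / 2) * ((x i ⬝ᵥ β) - (x i ⬝ᵥ βt)))
      - (1 / 2) * ∑ i, s i * omegaPG (x i ⬝ᵥ βt) (m i)
          * ((x i ⬝ᵥ β) ^ 2 - (x i ⬝ᵥ βt) ^ 2) := by
  rw [ge_iff_le, ← Finset.sum_sub_distrib, Finset.mul_sum, ← Finset.sum_sub_distrib]
  apply Finset.sum_le_sum
  intro i _
  have h := pointwise_bound (x i ⬝ᵥ β) (x i ⬝ᵥ βt) (m i) (y i) (hm i)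
  nlinarith [mul_le_mul_of_nonneg_left h (hs i)]
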